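/- For integers 1 ≤ m ≤ n and an indeterminate λ, the double sum over i from m to n and j from m to i of (-1)^(i+j) * [n,i] * C(i,j) * {j,m} * λ^(i-j) equals (-1)^(m+n) * (n!/m!) * C(λ-m, n-m), where C(λ-m, n-m) is the generalized binomial coefficient polynomial. -/

import Mathlib

open Finset

/-- Unsigned Stirling numbers of the first kind. -/
def stirling1 : ℕ → ℕ → ℕ
  | 0, 0 => 1
  | 0, _ + 1 => 0
  | _ + 1, 0 => 0
  | n + 1, k + 1 => n * stirling1 n (k + 1) + stirling1 n k

/-- Stirling numbers of the second kind. -/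
def stirling2 : ℕ → ℕ → ℕ
  | 0, 0 => 1
  | 0, _ + 1 => 0
  | _ + 1, 0 => 0
  | n + 1, k + 1 => (k + 1) * stirling2 n (k + 1) + stirling2 n k

/-- Generalized binomial coefficient `C(x, r) = x(x-1)⋯(x-r+1)/r!` in a ℚ-algebra. -/
noncomputable def gchoose {R : Type*} [CommRing R] [Algebra ℚ R] (x : R) (r : ℕ) : R :=
  algebraMap ℚ R ((r.factorial : ℚ)⁻¹) * ∏ i ∈ Finset.range r, (x - i)

lemma stirling1_eq_zero : ∀ n k, n < k → stirling1 n k = 0 := by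
  intro n
  induction n with
  | zero => intro k hk; match k, hk with | k+1, _ => rfl
  | succ n ih =>
    intro k hk
    match k, hk with
    | k+1, hk =>
      show n * stirling1 n (k+1) + stirling1 n k = 0
      rw [ih (k+1) (by omega), ih k (by omega)]
      simp

lemma stirling2_eq_zero : ∀ j m, j < m → stirling2 j m = 0 := by
  intro j
  induction j with
  | zero => intro m hm; match m, hm with | m+1, _ => rfl
  | succ j ih =>
    intro m hm
    match m, hm with
    | m+1, hm =>
      show (m+1) * stirling2 j (m+1) + stirling2 j m = 0
      rw [ih (m+1) (by omega), ih m (by omega)]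
      simp

lemma stirling1_genfun (n : ℕ) (x : ℚ) :
    ∑ i ∈ range (n+1), (stirling1 n i : ℚ) * x ^ i = ∏ t ∈ range n, (x + t) := by
  induction n with
  | zero => simp [stirling1]
  | succ n ih =>
    rw [Finset.sum_range_succ' (fun i => (stirling1 (n+1) i : ℚ) * x ^ i) (n+1)]
    have h0 : stirling1 (n+1) 0 = 0 := rfl
    have hrec : ∀ k, (stirling1 (n+1) (k+1) : ℚ)
        = n * stirling1 n (k+1) + stirling1 n k := by
      intro k; show ((n * stirling1 n (k + 1) + stirling1 n k : ℕ) : ℚ) = _; push_cast; ring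
    have key : ∑ i ∈ range (n+1), (stirling1 n i : ℚ) * x ^ (i+1)
        = x * ∏ t ∈ range n, (x + t) := by
      rw [← ih, Finset.mul_sum]; apply Finset.sum_congr rfl; intro i _; ring
    have key2 : ∑ i ∈ range (n+1), (stirling1 n (i+1) : ℚ) * x ^ (i+1)
        = (∏ t ∈ range n, (x + t)) - stirling1 n 0 := by
      rw [← ih, Finset.sum_range_succ' (fun i => (stirling1 n i : ℚ) * x ^ i) n,
        Finset.sum_range_succ (fun i => (stirling1 n (i+1) : ℚ) * x ^ (i+1)) n,
        stirling1_eq_zero n (n+1) (by omega)]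
      push_cast; ring
    have hns1 : (n : ℚ) * stirling1 n 0 = 0 := by
      cases n with
      | zero => simp
      | succ n => show _ * ((0:ℕ):ℚ) = 0; simp
    calc ∑ i ∈ range (n+1), (stirling1 (n+1) (i+1) : ℚ) * x ^ (i+1)
          + (stirling1 (n+1) 0 : ℚ) * x ^ 0
        = ∑ i ∈ range (n+1), ((n : ℚ) * (stirling1 n (i+1) : ℚ) * x ^ (i+1)
            + (stirling1 n i : ℚ) * x ^ (i+1)) := by
          rw [h0]
          simp only [Nat.cast_zero, zero_mul, add_zero]
          refine Finset.sum_congr rfl fun i _ => ?_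
          rw [hrec i]; ring
      _ = (n : ℚ) * (∑ i ∈ range (n+1), (stirling1 n (i+1) : ℚ) * x ^ (i+1))
            + ∑ i ∈ range (n+1), (stirling1 n i : ℚ) * x ^ (i+1) := by
          rw [Finset.sum_add_distrib, Finset.mul_sum]
          congr 1
          exact Finset.sum_congr rfl (fun i _ => by ring)
      _ = ∏ t ∈ range (n+1), (x + t) := by
          rw [key, key2, Finset.prod_range_succ, mul_sub, hns1]
          ring

lemma stirling1_genfun_signed (n : ℕ) (y : ℚ) :
    ∑ i ∈ range (n+1), (-1 : ℚ) ^ i * (stirling1 n i : ℚ) * y ^ i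
      = (-1 : ℚ) ^ n * ∏ t ∈ range n, (y - t) := by
  have h := stirling1_genfun n (-y)
  have h2 : ∑ i ∈ range (n+1), (stirling1 n i : ℚ) * (-y) ^ i
      = ∑ i ∈ range (n+1), (-1 : ℚ) ^ i * (stirling1 n i : ℚ) * y ^ i := by
    refine Finset.sum_congr rfl fun i _ => ?_
    rw [neg_pow]; ring
  rw [h2] at h
  rw [h]
  rw [show ∀ S : Finset ℕ, ∏ t ∈ S, (-y + (t:ℚ)) = ∏ t ∈ S, (-1) * (y - t) from
    fun S => Finset.prod_congr rfl (fun t _ => by ring)]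
  rw [Finset.prod_mul_distrib, Finset.prod_const, Finset.card_range]

lemma pascal_alt (m : ℕ) (f : ℕ → ℚ) :
    ∑ k ∈ range (m+2), (-1 : ℚ) ^ k * ((m+1).choose k : ℚ) * f k
      = ∑ k ∈ range (m+1), (-1 : ℚ) ^ k * (m.choose k : ℚ) * f k
        - ∑ k ∈ range (m+1), (-1 : ℚ) ^ k * (m.choose k : ℚ) * f (k+1) := by
  rw [Finset.sum_range_succ' (fun k => (-1 : ℚ) ^ k * ((m+1).choose k : ℚ) * f k) (m+1)]
  have hsplit : ∀ k, (-1 : ℚ) ^ (k+1) * ((m+1).choose (k+1) : ℚ) * f (k+1)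
      = (-1 : ℚ) ^ (k+1) * ((m.choose (k+1) : ℚ)) * f (k+1)
        - (-1 : ℚ) ^ k * (m.choose k : ℚ) * f (k+1) := by
    intro k
    rw [Nat.choose_succ_succ]
    push_cast
    ring
  rw [Finset.sum_congr rfl fun k _ => hsplit k, Finset.sum_sub_distrib]
  have : ∑ k ∈ range (m+1), (-1 : ℚ) ^ (k+1) * (m.choose (k+1) : ℚ) * f (k+1)
      = ∑ k ∈ range (m+1), (-1 : ℚ) ^ k * (m.choose k : ℚ) * f k
        - (-1 : ℚ) ^ 0 * (m.choose 0 : ℚ) * f 0 := by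
    rw [Finset.sum_range_succ' (fun k => (-1 : ℚ) ^ k * (m.choose k : ℚ) * f k) m] at *
    rw [Finset.sum_range_succ (fun k => (-1 : ℚ) ^ (k+1) * (m.choose (k+1) : ℚ) * f (k+1)) m,
      Nat.choose_succ_self]
    push_cast
    ring
  rw [this]
  simp
  ring

lemma stirling2_diff : ∀ j m : ℕ,
    ∑ k ∈ range (m+1), (-1 : ℚ) ^ k * (m.choose k : ℚ) * (k : ℚ) ^ j
      = (-1 : ℚ) ^ m * (m.factorial : ℚ) * (stirling2 j m : ℚ) := by
  intro j
  induction j with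
  | zero =>
    intro m
    cases m with
    | zero => simp [stirling2]
    | succ m =>
      simp only [pow_zero, mul_one]
      have h := Int.alternating_sum_range_choose (n := m+1)
      rw [if_neg (by omega)] at h
      have : ((∑ i ∈ range (m+2), (-1 : ℤ) ^ i * ((m+1).choose i : ℤ) : ℤ) : ℚ) = 0 := by
        rw [h]; simp
      push_cast at this
      rw [show stirling2 0 (m+1) = 0 from rfl, Nat.cast_zero, mul_zero]
      exact this
  | succ j ih =>
    intro m
    cases m with
    | zero => simp [show stirling2 (j+1) 0 = 0 from rfl]
    | succ m =>
      rw [Finset.sum_range_succ'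
        (fun k => (-1 : ℚ) ^ k * ((m+1).choose k : ℚ) * (k : ℚ) ^ (j+1)) (m+1)]
      have hterm : ∀ k, (-1 : ℚ) ^ (k+1) * ((m+1).choose (k+1) : ℚ) * ((k+1 : ℕ) : ℚ) ^ (j+1)
          = -(m+1 : ℚ) * ((-1 : ℚ) ^ k * (m.choose k : ℚ) * ((k+1 : ℕ) : ℚ) ^ j) := by
        intro k
        have h := Nat.add_one_mul_choose_eq m k
        have h' : ((m+1) * m.choose k : ℚ) = ((m+1).choose (k+1) : ℚ) * (k+1 : ℚ) := by
          exact_mod_cast congrArg (fun x : ℕ => (x : ℚ)) h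
        push_cast
        push_cast at h'
        have : ((k:ℚ)+1) ^ (j+1) = ((k:ℚ)+1) ^ j * ((k:ℚ)+1) := by ring
        rw [this]
        linear_combination ((-1:ℚ)^k * ((k:ℚ)+1)^j) * h'
      rw [Finset.sum_congr rfl fun k _ => hterm k]
      rw [← Finset.mul_sum]
      have hE : ∑ k ∈ range (m+1), (-1 : ℚ) ^ k * (m.choose k : ℚ) * ((k+1 : ℕ) : ℚ) ^ j
          = ∑ k ∈ range (m+1), (-1 : ℚ) ^ k * (m.choose k : ℚ) * (k : ℚ) ^ j
            - ∑ k ∈ range (m+2), (-1 : ℚ) ^ k * ((m+1).choose k : ℚ) * (k : ℚ) ^ j := by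
        rw [pascal_alt m (fun k => (k : ℚ) ^ j)]
        ring
      rw [hE, ih m, ih (m+1)]
      have hs2 : (stirling2 (j+1) (m+1) : ℚ)
          = (m+1 : ℚ) * stirling2 j (m+1) + stirling2 j m := by
        rw [show stirling2 (j+1) (m+1) = (m+1) * stirling2 j (m+1) + stirling2 j m from rfl]
        push_cast; ring
      rw [hs2]
      rw [Nat.factorial_succ]
      push_cast
      ring

lemma falling_diff_step (r : ℕ) (y : ℚ) :
    (∏ t ∈ range (r+1), (y - t)) - ∏ t ∈ range (r+1), (y - 1 - t)
      = (r + 1 : ℚ) * ∏ t ∈ range r, (y - 1 - t) := by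
  have h1 : ∏ t ∈ range (r+1), (y - t) = (∏ t ∈ range r, (y - 1 - t)) * y := by
    rw [Finset.prod_range_succ' (fun t => y - (t : ℚ)) r]
    congr 1
    · exact Finset.prod_congr rfl fun t _ => by push_cast; ring
    · simp
  have h2 : ∏ t ∈ range (r+1), (y - 1 - t) = (∏ t ∈ range r, (y - 1 - t)) * (y - 1 - r) := by
    rw [Finset.prod_range_succ]
  rw [h1, h2]; ring

lemma falling_diff (m : ℕ) : ∀ n : ℕ, m ≤ n → ∀ x : ℚ,
    ∑ k ∈ range (m+1), (-1 : ℚ) ^ k * (m.choose k : ℚ) * ∏ t ∈ range n, (x - k - t)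
      = ((n.factorial : ℚ) / ((n - m).factorial : ℚ)) * ∏ t ∈ range (n - m), (x - m - t) := by
  induction m with
  | zero =>
    intro n _ x
    simp only [Nat.sub_zero, zero_add, Finset.sum_range_one, Nat.choose_self]
    push_cast
    rw [div_self (by exact_mod_cast Nat.factorial_ne_zero n)]
    simp
  | succ m ih =>
    intro n hmn x
    have hle : m ≤ n := by omega
    rw [show m + 1 + 1 = m + 2 from rfl,
      pascal_alt m (fun k => ∏ t ∈ range n, (x - k - t))]
    have hsh : ∀ k : ℕ, (∏ t ∈ range n, (x - ((k+1 : ℕ) : ℚ) - t))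
        = ∏ t ∈ range n, ((x - 1) - (k : ℚ) - t) := by
      intro k; exact Finset.prod_congr rfl fun t _ => by push_cast; ring
    have hB : ∑ k ∈ range (m+1), (-1:ℚ)^k * (m.choose k : ℚ) * ∏ t ∈ range n, (x - ((k+1:ℕ):ℚ) - t)
        = ∑ k ∈ range (m+1), (-1:ℚ)^k * (m.choose k : ℚ) * ∏ t ∈ range n, ((x-1) - (k:ℚ) - t) :=
      Finset.sum_congr rfl fun k _ => by rw [hsh k]
    rw [hB, ih n hle x, ih n hle (x - 1)]
    have hr : n - m = (n - (m+1)) + 1 := by omega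
    have hy : ∀ t : ℕ, x - 1 - (m : ℚ) - t = (x - (m:ℚ)) - 1 - t := fun t => by ring
    rw [Finset.prod_congr rfl (fun t _ => hy t), hr,
      ← mul_sub, falling_diff_step (n - (m+1)) (x - (m:ℚ))]
    have hco : ∀ t : ℕ, x - (m:ℚ) - 1 - t = x - ((m+1 : ℕ) : ℚ) - t := fun t => by push_cast; ring
    rw [Finset.prod_congr rfl (fun t _ => hco t), Nat.factorial_succ]
    have hne1 : ((n - (m+1) : ℕ) : ℚ) + 1 ≠ 0 := by positivity
    have hne2 : (((n - (m+1)).factorial : ℕ) : ℚ) ≠ 0 := by exact_mod_cast Nat.factorial_ne_zero _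
    rw [Nat.cast_mul, Nat.cast_add, Nat.cast_one]
    have h3 : ((n:ℚ) - m) ≠ 0 := by
      have : (m:ℚ) < n := by exact_mod_cast (show m < n by omega)
      linarith
    field_simp

lemma key_inner (m i : ℕ) (l : ℚ) :
    ∑ j ∈ range (i+1), (-1:ℚ)^j * (i.choose j : ℚ) * (stirling2 j m : ℚ) * l ^ (i-j)
      = ((-1:ℚ)^m / (m.factorial : ℚ))
        * ∑ k ∈ range (m+1), (-1:ℚ)^k * (m.choose k : ℚ) * (l - k)^i := by
  have hexp : ∀ k : ℕ, (l - (k:ℚ))^i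
      = ∑ j ∈ range (i+1), (-1:ℚ)^j * (k:ℚ)^j * l^(i-j) * (i.choose j : ℚ) := by
    intro k
    rw [show l - (k:ℚ) = (-(k:ℚ)) + l by ring, add_pow]
    exact Finset.sum_congr rfl fun j _ => by rw [neg_pow]
  have h1 : ∑ k ∈ range (m+1), (-1:ℚ)^k * (m.choose k : ℚ) * (l - k)^i
      = ∑ j ∈ range (i+1), ((-1:ℚ)^j * l^(i-j) * (i.choose j : ℚ))
          * ∑ k ∈ range (m+1), (-1:ℚ)^k * (m.choose k : ℚ) * (k:ℚ)^j := by
    have step1 : ∑ k ∈ range (m+1), (-1:ℚ)^k * (m.choose k : ℚ) * (l - k)^i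
        = ∑ k ∈ range (m+1), ∑ j ∈ range (i+1),
            (-1:ℚ)^k * (m.choose k : ℚ) * ((-1:ℚ)^j * (k:ℚ)^j * l^(i-j) * (i.choose j : ℚ)) := by
      refine Finset.sum_congr rfl fun k _ => ?_
      rw [hexp k, Finset.mul_sum]
    rw [step1, Finset.sum_comm]
    refine Finset.sum_congr rfl fun j _ => ?_
    rw [Finset.mul_sum]
    exact Finset.sum_congr rfl fun k _ => by ring
  rw [h1]
  rw [Finset.mul_sum]
  refine Finset.sum_congr rfl fun j _ => ?_
  rw [stirling2_diff j m]
  have hm1 : (-1:ℚ)^m * (-1)^m = 1 := by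
    rw [← pow_add]; exact Even.neg_one_pow ⟨m, rfl⟩
  have hfm : ((m.factorial : ℕ) : ℚ) ≠ 0 := by exact_mod_cast Nat.factorial_ne_zero m
  have hm2 : ((-1:ℚ))^(m*2) = 1 := by rw [pow_mul, pow_two]; exact hm1
  field_simp
  linear_combination (-((i.choose j : ℚ) * (stirling2 j m : ℚ) * l^(i-j))) * hm2

theorem stmt3 (m n : ℕ) (hm : 1 ≤ m) (hmn : m ≤ n) (l : ℚ) :
    ∑ i ∈ Finset.Icc m n, ∑ j ∈ Finset.Icc m i,
        (-1 : ℚ) ^ (i + j) * stirling1 n i * i.choose j * stirling2 j m * l ^ (i - j) =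
      (-1 : ℚ) ^ (m + n) * ((n.factorial : ℚ) / m.factorial) * gchoose (l - m) (n - m) := by
  have step1 : ∀ i : ℕ, ∑ j ∈ Finset.Icc m i,
      (-1 : ℚ) ^ (i + j) * stirling1 n i * i.choose j * stirling2 j m * l ^ (i - j)
      = ∑ j ∈ range (i+1),
        (-1 : ℚ) ^ (i + j) * stirling1 n i * i.choose j * stirling2 j m * l ^ (i - j) := by
    intro i
    refine Finset.sum_subset (fun j hj => ?_) (fun j hjr hjn => ?_)
    · rw [Finset.mem_Icc] at hj; rw [Finset.mem_range]; omega
    · rw [Finset.mem_range] at hjr; rw [Finset.mem_Icc] at hjn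
      rw [stirling2_eq_zero j m (by omega)]
      simp
  rw [Finset.sum_congr rfl fun i _ => step1 i]
  have step2 : ∑ i ∈ Finset.Icc m n, ∑ j ∈ range (i+1),
      (-1 : ℚ) ^ (i + j) * stirling1 n i * i.choose j * stirling2 j m * l ^ (i - j)
      = ∑ i ∈ range (n+1), ∑ j ∈ range (i+1),
      (-1 : ℚ) ^ (i + j) * stirling1 n i * i.choose j * stirling2 j m * l ^ (i - j) := by
    refine Finset.sum_subset (fun i hi => ?_) (fun i hir hin => ?_)
    · rw [Finset.mem_Icc] at hi; rw [Finset.mem_range]; omega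
    · rw [Finset.mem_range] at hir; rw [Finset.mem_Icc] at hin
      refine Finset.sum_eq_zero fun j hj => ?_
      rw [Finset.mem_range] at hj
      rw [stirling2_eq_zero j m (by omega)]
      simp
  rw [step2]
  have step3 : ∀ i : ℕ, ∑ j ∈ range (i+1),
      (-1 : ℚ) ^ (i + j) * stirling1 n i * i.choose j * stirling2 j m * l ^ (i - j)
      = ((-1:ℚ)^m / (m.factorial : ℚ))
        * ∑ k ∈ range (m+1), ((-1:ℚ)^k * (m.choose k : ℚ))
            * ((-1:ℚ)^i * (stirling1 n i : ℚ) * (l - k)^i) := by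
    intro i
    have h1 : ∑ j ∈ range (i+1),
        (-1 : ℚ) ^ (i + j) * stirling1 n i * i.choose j * stirling2 j m * l ^ (i - j)
        = (-1:ℚ)^i * (stirling1 n i : ℚ)
          * ∑ j ∈ range (i+1), (-1:ℚ)^j * (i.choose j : ℚ) * (stirling2 j m : ℚ) * l^(i-j) := by
      rw [Finset.mul_sum]
      refine Finset.sum_congr rfl fun j _ => ?_
      rw [pow_add]
      ring
    rw [h1, key_inner m i l, Finset.mul_sum, Finset.mul_sum, Finset.mul_sum]
    refine Finset.sum_congr rfl fun k _ => ?_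
    ring
  rw [Finset.sum_congr rfl fun i _ => step3 i, ← Finset.mul_sum, Finset.sum_comm]
  have step4 : ∀ k : ℕ, ∑ i ∈ range (n+1), ((-1:ℚ)^k * (m.choose k : ℚ))
      * ((-1:ℚ)^i * (stirling1 n i : ℚ) * (l - k)^i)
      = (-1:ℚ)^n * (((-1:ℚ)^k * (m.choose k : ℚ)) * ∏ t ∈ range n, (l - k - t)) := by
    intro k
    rw [← Finset.mul_sum, stirling1_genfun_signed n (l - k)]
    ring
  rw [Finset.sum_congr rfl fun k _ => step4 k, ← Finset.mul_sum]
  have step5 : ∑ k ∈ range (m+1), ((-1:ℚ)^k * (m.choose k : ℚ)) * ∏ t ∈ range n, (l - k - t)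
      = ((n.factorial : ℚ) / ((n - m).factorial : ℚ)) * ∏ t ∈ range (n - m), (l - m - t) := by
    rw [← falling_diff m n hmn l]
  rw [step5]
  rw [show gchoose (l - m) (n - m)
      = (((n-m).factorial : ℚ))⁻¹ * ∏ t ∈ range (n - m), (l - m - t) by
    rw [gchoose]
    simp only [Algebra.algebraMap_self, RingHom.id_apply]]
  have hfm : ((m.factorial : ℕ) : ℚ) ≠ 0 := by exact_mod_cast Nat.factorial_ne_zero m
  have hfnm : (((n-m).factorial : ℕ) : ℚ) ≠ 0 := by exact_mod_cast Nat.factorial_ne_zero _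
  rw [pow_add]
  field_simp
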